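/- (Laver tree dichotomy, Lemma on fronts) Let p be a Laver tree and B ⊆ p a set of nodes of p. Then either there exists a Laver tree q ⊆ p with stem(q) = stem(p) such that q ∩ B = ∅, or there exists a Laver tree q ⊆ p with stem(q) = stem(p) such that every infinite branch of q has an initial segment in B (i.e., B is a front in q). -/

import Mathlib

/-- `p ⊆ ω^{<ω}` is a Laver tree with stem `stem`: `p` contains `stem`, is closed under
initial segments, every node of `p` is comparable with `stem`, and every node extending
`stem` has infinitely many immediate successors in `p`. -/
def IsLaverTreeWithStem (p : Set (List ℕ)) (stem : List ℕ) : Prop :=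
  stem ∈ p ∧
  (∀ s ∈ p, ∀ t : List ℕ, t <+: s → t ∈ p) ∧
  (∀ s ∈ p, s <+: stem ∨ stem <+: s) ∧
  (∀ s ∈ p, stem <+: s → {n : ℕ | s ++ [n] ∈ p}.Infinite)

/-- `B` is a front in `q`: every infinite branch of `q` meets `B`. -/
def LFront (B q : Set (List ℕ)) : Prop :=
  ∀ x : ℕ → ℕ, (∀ n, (List.range n).map x ∈ q) → ∃ n, (List.range n).map x ∈ B

/-- `s` is a good node: there is a Laver subtree of `p` with stem `s` in which `B` is a front. -/
def LGood (p B : Set (List ℕ)) (s : List ℕ) : Prop :=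
  ∃ q : Set (List ℕ), q ⊆ p ∧ IsLaverTreeWithStem q s ∧ LFront B q

lemma res_pref (x : ℕ → ℕ) {m n : ℕ} (h : m ≤ n) :
    (List.range m).map x <+: (List.range n).map x := by
  apply List.IsPrefix.map
  rw [List.prefix_iff_eq_take]
  simp [List.take_range, Nat.min_eq_left h]

lemma res_succ (x : ℕ → ℕ) (n : ℕ) :
    (List.range (n + 1)).map x = (List.range n).map x ++ [x n] := by
  simp [List.range_succ]

/-- If `s ∈ B` then `s` is good, as witnessed by the full subtree below `s`. -/
lemma lgood_of_mem (p : Set (List ℕ)) (stem : List ℕ) (hp : IsLaverTreeWithStem p stem)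
    (B : Set (List ℕ)) {s : List ℕ} (hs : s ∈ p) (hstem : stem <+: s) (hsB : s ∈ B) :
    LGood p B s := by
  obtain ⟨hp1, hp2, hp3, hp4⟩ := hp
  refine ⟨{t ∈ p | t <+: s ∨ s <+: t}, fun t ht => ht.1,
    ⟨⟨hs, Or.inl List.prefix_rfl⟩, ?_, ?_, ?_⟩, ?_⟩
  · rintro t ⟨htp, hts⟩ u hut
    refine ⟨hp2 t htp u hut, ?_⟩
    rcases hts with h | h
    · exact Or.inl (hut.trans h)
    · exact List.prefix_or_prefix_of_prefix hut h
  · rintro t ⟨_, h⟩; exact h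
  · rintro t ⟨htp, hts⟩ hst
    refine Set.Infinite.mono ?_ (hp4 t htp (hstem.trans hst))
    intro n hn
    exact ⟨hn, Or.inr (hst.trans (List.prefix_append t [n]))⟩
  · intro x hx
    refine ⟨s.length, ?_⟩
    obtain ⟨_, hcomp⟩ := hx s.length
    have heq : (List.range s.length).map x = s := by
      rcases hcomp with h | h
      · exact h.eq_of_length (by simp)
      · exact (h.eq_of_length (by simp)).symm
    rw [heq]; exact hsB

/-- Merging lemma: if infinitely many immediate successors of `s` are good, so is `s`. -/
lemma lgood_merge (p B : Set (List ℕ)) (hp2 : ∀ s ∈ p, ∀ t : List ℕ, t <+: s → t ∈ p)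
    {s : List ℕ} (hs : s ∈ p)
    (hN : {n : ℕ | s ++ [n] ∈ p ∧ LGood p B (s ++ [n])}.Infinite) :
    LGood p B s := by
  classical
  set N := {n : ℕ | s ++ [n] ∈ p ∧ LGood p B (s ++ [n])} with hNdef
  have hch : ∀ n ∈ N, ∃ q : Set (List ℕ),
      q ⊆ p ∧ IsLaverTreeWithStem q (s ++ [n]) ∧ LFront B q := fun n hn => hn.2
  choose! Q hQsub hQtree hQfront using hch
  refine ⟨{t | t <+: s} ∪ ⋃ n ∈ N, Q n, ?_, ⟨?_, ?_, ?_, ?_⟩, ?_⟩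
  · rintro t (ht | ht)
    · exact hp2 s hs t ht
    · obtain ⟨n, hn, htn⟩ := Set.mem_iUnion₂.mp ht
      exact hQsub n hn htn
  · exact Or.inl List.prefix_rfl
  · rintro t (ht | ht) u hut
    · exact Or.inl (hut.trans ht)
    · obtain ⟨n, hn, htn⟩ := Set.mem_iUnion₂.mp ht
      exact Or.inr (Set.mem_iUnion₂.mpr ⟨n, hn, (hQtree n hn).2.1 t htn u hut⟩)
  · rintro t (ht | ht)
    · exact Or.inl ht
    · obtain ⟨n, hn, htn⟩ := Set.mem_iUnion₂.mp ht
      rcases (hQtree n hn).2.2.1 t htn with h | h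
      · rcases List.prefix_concat_iff.mp h with h' | h'
        · exact Or.inr (h' ▸ List.prefix_append s [n])
        · exact Or.inl h'
      · exact Or.inr ((List.prefix_append s [n]).trans h)
  · intro t ht hst
    by_cases hts : t = s
    · subst hts
      refine Set.Infinite.mono ?_ hN
      intro n hn
      exact Or.inr (Set.mem_iUnion₂.mpr ⟨n, hn, (hQtree n hn).1⟩)
    · rcases ht with ht | ht
      · exact absurd (ht.eq_of_length (le_antisymm ht.length_le hst.length_le)) hts
      · obtain ⟨n, hn, htn⟩ := Set.mem_iUnion₂.mp ht
        have hsn : s ++ [n] <+: t := by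
          rcases (hQtree n hn).2.2.1 t htn with h | h
          · rcases List.prefix_concat_iff.mp h with h' | h'
            · exact h' ▸ List.prefix_rfl
            · exact absurd (h'.eq_of_length (le_antisymm h'.length_le hst.length_le)) hts
          · exact h
        refine Set.Infinite.mono ?_ ((hQtree n hn).2.2.2 t htn hsn)
        intro m hm
        exact Or.inr (Set.mem_iUnion₂.mpr ⟨n, hn, hm⟩)
  · intro x hx
    set L := s.length with hL
    have h1 := hx (L + 1)
    have hmem : ∃ m ∈ N, (List.range (L + 1)).map x = s ++ [m] := by
      rcases h1 with h | h
      · have := List.IsPrefix.length_le h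
        simp [hL] at this
      · obtain ⟨m, hm, hmm⟩ := Set.mem_iUnion₂.mp h
        refine ⟨m, hm, ?_⟩
        rcases (hQtree m hm).2.2.1 _ hmm with h' | h'
        · exact h'.eq_of_length (by simp [hL])
        · exact (h'.eq_of_length (by simp [hL])).symm
    obtain ⟨m₀, hm₀, hEq⟩ := hmem
    have hbranch : ∀ n, (List.range n).map x ∈ Q m₀ := by
      intro n
      rcases le_or_gt n (L + 1) with hn | hn
      · have hpre : (List.range n).map x <+: s ++ [m₀] := hEq ▸ res_pref x hn
        exact (hQtree m₀ hm₀).2.1 _ (hQtree m₀ hm₀).1 _ hpre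
      · rcases hx n with h | h
        · have := List.IsPrefix.length_le h
          simp [hL] at this
          omega
        · obtain ⟨m, hm, hmm⟩ := Set.mem_iUnion₂.mp h
          have hsm : s ++ [m] <+: (List.range n).map x := by
            rcases (hQtree m hm).2.2.1 _ hmm with h' | h'
            · have := List.IsPrefix.length_le h'
              simp [hL] at this
              omega
            · exact h'
          have hsm' : (List.range (L + 1)).map x <+: (List.range n).map x :=
            res_pref x (by omega)
          have : s ++ [m] = (List.range (L + 1)).map x := by
            rcases List.prefix_or_prefix_of_prefix hsm hsm' with h' | h'
            · exact h'.eq_of_length (by simp [hL])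
            · exact (h'.eq_of_length (by simp [hL])).symm
          rw [hEq] at this
          have : m = m₀ := by
            have := (List.append_inj this rfl).2
            simpa using this
          exact this ▸ hmm
    exact hQfront m₀ hm₀ x hbranch

/-- Laver tree dichotomy: for every Laver tree `p` and every set `B` of nodes of `p`,
either there is a Laver subtree `q ⊆ p` with the same stem avoiding `B`, or there is
a Laver subtree `q ⊆ p` with the same stem in which `B` is a front, i.e. every infinite
branch of `q` has an initial segment in `B`. -/
theorem laver_front_dichotomy (p : Set (List ℕ)) (stem : List ℕ)
    (hp : IsLaverTreeWithStem p stem) (B : Set (List ℕ)) (hB : B ⊆ p) :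
    (∃ q : Set (List ℕ), q ⊆ p ∧ IsLaverTreeWithStem q stem ∧ q ∩ B = ∅) ∨
    (∃ q : Set (List ℕ), q ⊆ p ∧ IsLaverTreeWithStem q stem ∧
      ∀ x : ℕ → ℕ, (∀ n, (List.range n).map x ∈ q) → ∃ n, (List.range n).map x ∈ B) := by
  classical
  obtain ⟨hp1, hp2, hp3, hp4⟩ := hp
  by_cases h1 : ∃ t ∈ B, t <+: stem
  · right
    obtain ⟨t, htB, hts⟩ := h1
    refine ⟨p, subset_rfl, ⟨hp1, hp2, hp3, hp4⟩, fun x hx => ⟨t.length, ?_⟩⟩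
    have hcomp := hp3 _ (hx t.length)
    have heq : (List.range t.length).map x = t := by
      rcases hcomp with h | h
      · rcases List.prefix_or_prefix_of_prefix h hts with h' | h'
        · exact h'.eq_of_length (by simp)
        · exact (h'.eq_of_length (by simp)).symm
      · exact ((hts.trans h).eq_of_length (by simp)).symm
    rw [heq]; exact htB
  · push_neg at h1
    by_cases h2 : LGood p B stem
    · right
      obtain ⟨q, hq1, hq2, hq3⟩ := h2
      exact ⟨q, hq1, hq2, hq3⟩
    · left
      set q : Set (List ℕ) :=
        {t | t <+: stem} ∪
          {t ∈ p | stem <+: t ∧ ∀ u, stem <+: u → u <+: t → ¬ LGood p B u} with hqdef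
      have key : ∀ t ∈ p, stem <+: t →
          (∀ u, stem <+: u → u <+: t → ¬ LGood p B u) →
          {n : ℕ | t ++ [n] ∈ q}.Infinite := by
        intro t htp hst hbad
        have hbt : ¬ LGood p B t := hbad t hst List.prefix_rfl
        have hM : {n : ℕ | t ++ [n] ∈ p ∧ ¬ LGood p B (t ++ [n])}.Infinite := by
          by_contra hfin
          apply hbt
          apply lgood_merge p B hp2 htp
          have hdiff := (hp4 t htp hst).diff (Set.not_infinite.mp hfin)
          refine Set.Infinite.mono ?_ hdiff
          rintro n ⟨hn1, hn2⟩
          refine ⟨hn1, ?_⟩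
          by_contra hg
          exact hn2 ⟨hn1, hg⟩
        refine Set.Infinite.mono ?_ hM
        rintro n ⟨hn1, hn2⟩
        refine Or.inr ⟨hn1, hst.trans (List.prefix_append t [n]), ?_⟩
        intro u hu1 hu2
        rcases List.prefix_concat_iff.mp hu2 with h | h
        · exact h ▸ hn2
        · exact hbad u hu1 h
      refine ⟨q, ?_, ⟨?_, ?_, ?_, ?_⟩, ?_⟩
      · rintro t (ht | ht)
        · exact hp2 stem hp1 t ht
        · exact ht.1
      · exact Or.inl List.prefix_rfl
      · rintro t (ht | ht) u hut
        · exact Or.inl (hut.trans ht)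
        · obtain ⟨htp, hst, hbad⟩ := ht
          have hup : u ∈ p := hp2 t htp u hut
          rcases hp3 u hup with h | h
          · exact Or.inl h
          · exact Or.inr ⟨hup, h, fun v hv1 hv2 => hbad v hv1 (hv2.trans hut)⟩
      · rintro t (ht | ht)
        · exact Or.inl ht
        · exact Or.inr ht.2.1
      · rintro t (ht | ht) hst
        · have hts : t = stem := ht.eq_of_length (le_antisymm ht.length_le hst.length_le)
          subst hts
          refine key t hp1 List.prefix_rfl ?_
          intro u hu1 hu2
          have : u = t := hu2.eq_of_length (le_antisymm hu2.length_le hu1.length_le)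
          subst this
          exact h2
        · exact key t ht.1 ht.2.1 ht.2.2
      · rw [Set.eq_empty_iff_forall_notMem]
        rintro t ⟨htq, htB⟩
        rcases htq with ht | ht
        · exact h1 t htB ht
        · obtain ⟨htp, hst, hbad⟩ := ht
          exact hbad t hst List.prefix_rfl
            (lgood_of_mem p stem ⟨hp1, hp2, hp3, hp4⟩ B htp hst htB)
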